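/- Let G be a simple graph on n vertices with maximum degree at most D, where D ≥ 1. Then for every integer w ≥ 1, the number of w-element vertex subsets S of G such that the subgraph of G induced on S is connected is at most n·(4D)^w. -/

import Mathlib

open Relation
set_option linter.unusedSectionVars false

section Aux
variable {V : Type*} [Fintype V] [DecidableEq V]

/-- One step of adjacency within a finset. -/
def CSStep (G : SimpleGraph V) (S : Finset V) (a b : V) : Prop :=
  G.Adj a b ∧ a ∈ S ∧ b ∈ S

/-- Reachability within a finset. -/
def CSReach (G : SimpleGraph V) (S : Finset V) : V → V → Prop :=
  Relation.ReflTransGen (CSStep G S)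

lemma csreach_symm (G : SimpleGraph V) (S : Finset V) :
    Symmetric (CSReach G S) :=
  haveI : Std.Symm (CSStep G S) := ⟨fun _ _ h => ⟨h.1.symm, h.2.2, h.2.1⟩⟩
  fun a b h => (Relation.ReflTransGen.stdSymm (r := CSStep G S)).symm a b h

/-- The decoder step function. -/
noncomputable def stepFn (G : SimpleGraph V) [DecidableRel G.Adj] (D : ℕ) :
    (List V × Finset V) → Option (Fin D) → (List V × Finset V)
  | (st, vis), none => (st.tail, vis)
  | ([], vis), some _ => ([], vis)
  | (u :: st, vis), some i =>
      ((G.neighborFinset u).toList.getD i u :: u :: st,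
        insert ((G.neighborFinset u).toList.getD i u) vis)

/-- Run the decoder. -/
noncomputable def runFn (G : SimpleGraph V) [DecidableRel G.Adj] (D : ℕ)
    (s : List V × Finset V) (code : List (Option (Fin D))) : List V × Finset V :=
  code.foldl (stepFn G D) s

lemma runFn_nil (G : SimpleGraph V) [DecidableRel G.Adj] (D : ℕ) (s : List V × Finset V) :
    runFn G D s [] = s := rfl

lemma runFn_cons (G : SimpleGraph V) [DecidableRel G.Adj] (D : ℕ) (s : List V × Finset V)
    (c : Option (Fin D)) (code : List (Option (Fin D))) :
    runFn G D s (c :: code) = runFn G D (stepFn G D s c) code := rfl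

lemma runFn_append (G : SimpleGraph V) [DecidableRel G.Adj] (D : ℕ) (s : List V × Finset V)
    (c₁ c₂ : List (Option (Fin D))) :
    runFn G D s (c₁ ++ c₂) = runFn G D (runFn G D s c₁) c₂ :=
  List.foldl_append

end Aux

section Rebuild

/-- Rebuild a code from its boolean mask and its list of values. -/
def rebuild {D : ℕ} : List Bool → List (Fin D) → List (Option (Fin D))
  | [], _ => []
  | true :: bs, d :: ds => some d :: rebuild bs ds
  | true :: bs, [] => none :: rebuild bs []
  | false :: bs, ds => none :: rebuild bs ds

lemma rebuild_spec {D : ℕ} (code : List (Option (Fin D))) :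
    rebuild (code.map Option.isSome) (code.filterMap id) = code := by
  induction code with
  | nil => rfl
  | cons c rest ih =>
    cases c <;> simp at ih <;> simp [rebuild, ih]

lemma length_filterMap_id {D : ℕ} (code : List (Option (Fin D))) :
    (code.filterMap id).length = code.countP (fun o => o.isSome) := by
  induction code with
  | nil => rfl
  | cons c rest ih =>
    cases c <;> simp at ih <;> simp [List.countP_cons, ih]

end Rebuild

section Key
variable {V : Type*} [Fintype V] [DecidableEq V]

lemma key_lemma (G : SimpleGraph V) [DecidableRel G.Adj] {D : ℕ}
    (hdeg : ∀ u, G.degree u ≤ D) :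
    ∀ (m : ℕ) (S : Finset V) (v : V), S.card ≤ m → v ∈ S →
      (∀ a ∈ S, ∀ b ∈ S, CSReach G S a b) →
      ∃ code : List (Option (Fin D)),
        code.length = 2 * (S.card - 1) ∧
        code.countP (fun o => o.isSome) = S.card - 1 ∧
        ∀ stack vis, v ∈ vis →
          runFn G D (v :: stack, vis) code = (v :: stack, vis ∪ S) := by
  intro m
  induction m with
  | zero =>
    intro S v hm hv _
    exact absurd (Finset.card_pos.2 ⟨v, hv⟩) (by omega)
  | succ m ih =>
    intro S v hm hv hconn
    by_cases hS1 : S.card ≤ 1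
    · have hcard : S.card = 1 := le_antisymm hS1 (Finset.card_pos.2 ⟨v, hv⟩)
      have hSv : S = {v} := by
        obtain ⟨a, ha⟩ := Finset.card_eq_one.1 hcard
        subst ha
        simpa using (Finset.mem_singleton.1 hv).symm ▸ rfl
      subst hSv
      refine ⟨[], by simp, by simp, fun stack vis hvis => ?_⟩
      rw [runFn_nil, Finset.union_eq_left.mpr (Finset.singleton_subset_iff.2 hvis)]
    · have h2 : 2 ≤ S.card := by omega
      obtain ⟨u, hu, huv⟩ := Finset.exists_mem_ne (show 1 < S.card by omega) v
      obtain ⟨x, hxstep, -⟩ : ∃ c, CSStep G S v c ∧ CSReach G S c u := by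
        rcases (hconn v hv u hu).cases_head with h | h
        · exact absurd h.symm huv
        · exact h
      obtain ⟨hadj, -, hxS⟩ := hxstep
      have hxv : x ≠ v := fun h => G.irrefl (h ▸ hadj)
      classical
      set E := S.erase v with hE
      have hxE : x ∈ E := Finset.mem_erase.2 ⟨hxv, hxS⟩
      set C := E.filter (fun y => CSReach G E x y) with hC
      have hxC : x ∈ C := Finset.mem_filter.2 ⟨hxE, Relation.ReflTransGen.refl⟩
      have hCE : C ⊆ E := Finset.filter_subset _ _
      have hCS : C ⊆ S := hCE.trans (Finset.erase_subset _ _)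
      have hvC : v ∉ C := fun h => (Finset.mem_erase.1 (hCE h)).1 rfl
      -- reachability from x inside E stays inside C
      have hsub : ∀ y, CSReach G E x y → CSReach G C x y := by
        intro y hy
        induction hy with
        | refl => exact Relation.ReflTransGen.refl
        | tail hxb hbc ihb =>
          rename_i b c
          have hbC : b ∈ C := Finset.mem_filter.2 ⟨hbc.2.1, hxb⟩
          have hcC : c ∈ C := Finset.mem_filter.2 ⟨hbc.2.2, hxb.tail hbc⟩
          exact ihb.tail ⟨hbc.1, hbC, hcC⟩
      -- C is connected
      have hconnC : ∀ a ∈ C, ∀ b ∈ C, CSReach G C a b := by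
        intro a ha b hb
        have hxa := hsub a (Finset.mem_filter.1 ha).2
        have hxb := hsub b (Finset.mem_filter.1 hb).2
        exact (csreach_symm G C hxa).trans hxb
      have hvSC : v ∈ S \ C := Finset.mem_sdiff.2 ⟨hv, hvC⟩
      -- paths to v avoid C
      have toV : ∀ y, CSReach G S y v → y ∈ S \ C → CSReach G (S \ C) y v := by
        intro y hy
        induction hy using Relation.ReflTransGen.head_induction_on with
        | refl => intro _; exact Relation.ReflTransGen.refl
        | head hab hbv ihb =>
          rename_i a b
          intro haSC
          by_cases hav : a = v
          · exact hav ▸ Relation.ReflTransGen.refl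
          · have haE : a ∈ E := Finset.mem_erase.2 ⟨hav, hab.2.1⟩
            have hbC : b ∉ C := by
              intro hbC'
              have hbE : b ∈ E := hCE hbC'
              have : a ∈ C := Finset.mem_filter.2
                ⟨haE, ((Finset.mem_filter.1 hbC').2).tail ⟨hab.1.symm, hbE, haE⟩⟩
              exact (Finset.mem_sdiff.1 haSC).2 this
            have hbSC : b ∈ S \ C := Finset.mem_sdiff.2 ⟨hab.2.2, hbC⟩
            exact Relation.ReflTransGen.head ⟨hab.1, haSC, hbSC⟩ (ihb hbSC)
      have hconnSC : ∀ a ∈ S \ C, ∀ b ∈ S \ C, CSReach G (S \ C) a b := by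
        intro a ha b hb
        have h1 := toV a (hconn a (Finset.mem_sdiff.1 ha).1 v hv) ha
        have h2 := toV b (hconn b (Finset.mem_sdiff.1 hb).1 v hv) hb
        exact h1.trans (csreach_symm G (S \ C) h2)
      -- cardinalities
      have hEcard : E.card = S.card - 1 := Finset.card_erase_of_mem hv
      have hCcard1 : 1 ≤ C.card := Finset.card_pos.2 ⟨x, hxC⟩
      have hCcardE : C.card ≤ E.card := Finset.card_le_card hCE
      have hSCcard : (S \ C).card = S.card - C.card := Finset.card_sdiff_of_subset hCS
      have hCcardS : C.card ≤ S.card := Finset.card_le_card hCS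
      have hSCcard1 : 1 ≤ (S \ C).card := Finset.card_pos.2 ⟨v, hvSC⟩
      -- recursive calls
      obtain ⟨code₁, hlen₁, hcnt₁, hrun₁⟩ := ih C x (by omega) hxC hconnC
      obtain ⟨code₂, hlen₂, hcnt₂, hrun₂⟩ := ih (S \ C) v (by omega) hvSC hconnSC
      -- the index of x among neighbours of v
      have hxnb : x ∈ (G.neighborFinset v).toList := by
        rw [Finset.mem_toList, SimpleGraph.mem_neighborFinset]; exact hadj
      obtain ⟨j, hj, hget⟩ := List.mem_iff_getElem.1 hxnb
      have hjlen : (G.neighborFinset v).toList.length = G.degree v := by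
        rw [Finset.length_toList]; rfl
      have hjD : j < D := by
        have := hdeg v; omega
      refine ⟨some ⟨j, hjD⟩ :: (code₁ ++ none :: code₂), ?_, ?_, ?_⟩
      · simp only [List.length_cons, List.length_append, hlen₁, hlen₂]
        omega
      · simp only [List.countP_cons, List.countP_append, hcnt₁, hcnt₂,
          Option.isSome_some, Option.isSome_none]
        norm_num
        omega
      · intro stack vis hvis
        have hgetD : (G.neighborFinset v).toList[(j : ℕ)]?.getD v = x := by
          rw [List.getElem?_eq_getElem hj, Option.getD_some, hget]
        rw [runFn_cons]
        have hstep : stepFn G D (v :: stack, vis) (some ⟨j, hjD⟩) =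
            (x :: v :: stack, insert x vis) := by
          simp [stepFn, hgetD]
        rw [hstep, runFn_append,
          hrun₁ (v :: stack) (insert x vis) (Finset.mem_insert_self x vis),
          runFn_cons]
        have hstep2 : stepFn G D (x :: v :: stack, insert x vis ∪ C) none =
            (v :: stack, insert x vis ∪ C) := rfl
        rw [hstep2, hrun₂ stack (insert x vis ∪ C)
          (Finset.mem_union_left _ (Finset.mem_insert_of_mem hvis))]
        have : insert x vis ∪ C ∪ (S \ C) = vis ∪ S := by
          ext a
          simp only [Finset.mem_union, Finset.mem_insert, Finset.mem_sdiff]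
          constructor
          · rintro (((rfl | h) | h) | ⟨h, -⟩)
            · exact Or.inr hxS
            · exact Or.inl h
            · exact Or.inr (hCS h)
            · exact Or.inr h
          · rintro (h | h)
            · exact Or.inl (Or.inl (Or.inr h))
            · by_cases hc : a ∈ C
              · exact Or.inl (Or.inr hc)
              · exact Or.inr ⟨h, hc⟩
        rw [this]

end Key

section Bridge
variable {V : Type*} [Fintype V] [DecidableEq V]

lemma walk_csreach (G : SimpleGraph V) {S : Finset V} :
    ∀ {a b : ↥(S : Set V)} (_ : (G.induce (S : Set V)).Walk a b),
      CSReach G S (a : V) (b : V) := by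
  intro a b p
  induction p with
  | nil => exact Relation.ReflTransGen.refl
  | cons h p ih =>
    rename_i c d e
    exact Relation.ReflTransGen.head
      ⟨h, Finset.mem_coe.mp c.2, Finset.mem_coe.mp d.2⟩ ih

lemma induce_connected_csreach (G : SimpleGraph V) {S : Finset V}
    (h : (G.induce (S : Set V)).Connected) :
    ∀ a ∈ S, ∀ b ∈ S, CSReach G S a b := by
  intro a ha b hb
  obtain ⟨p⟩ := h.preconnected ⟨a, by simpa using ha⟩ ⟨b, by simpa using hb⟩
  exact walk_csreach G p

end Bridge

/-- In a simple graph on `n` vertices with maximum degree at most `D ≥ 1`, for every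
`w ≥ 1` the number of `w`-element vertex subsets inducing a connected subgraph is at
most `n · (4D)^w`. -/
theorem card_connected_subsets_le {V : Type*} [Fintype V] (G : SimpleGraph V)
    [DecidableRel G.Adj] (n D : ℕ) (hn : Fintype.card V = n) (hD : 1 ≤ D)
    (hdeg : ∀ v, G.degree v ≤ D) (w : ℕ) (hw : 1 ≤ w) :
    {S : Finset V | S.card = w ∧ (G.induce (S : Set V)).Connected}.ncard
      ≤ n * (4 * D) ^ w := by
  classical
  set g : V × List.Vector Bool (2 * (w - 1)) × List.Vector (Fin D) (w - 1) → Finset V := fun p =>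
    (runFn G D ([p.1], {p.1}) (rebuild p.2.1.toList p.2.2.toList)).2 with hg
  have hsub : {S : Finset V | S.card = w ∧ (G.induce (S : Set V)).Connected}
      ⊆ Set.range g := by
    rintro S ⟨hcard, hconn'⟩
    have hne : S.Nonempty := Finset.card_pos.1 (by omega)
    obtain ⟨v, hv⟩ := hne
    obtain ⟨code, hlen, hcnt, hrun⟩ := key_lemma G hdeg S.card S v le_rfl hv
      (induce_connected_csreach G hconn')
    refine ⟨⟨v, ⟨code.map Option.isSome, by simp [hlen, hcard]⟩,
      ⟨code.filterMap id, by rw [length_filterMap_id, hcnt, hcard]⟩⟩, ?_⟩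
    show (runFn G D ([v], {v}) (rebuild (code.map Option.isSome) (code.filterMap id))).2 = S
    rw [rebuild_spec, hrun [] {v} (Finset.mem_singleton_self v)]
    exact Finset.union_eq_right.mpr (Finset.singleton_subset_iff.2 hv)
  have hcardA : Fintype.card
      (V × List.Vector Bool (2 * (w - 1)) × List.Vector (Fin D) (w - 1))
      = n * (2 ^ (2 * (w - 1)) * D ^ (w - 1)) := by
    simp [Fintype.card_prod, card_vector, hn]
  calc {S : Finset V | S.card = w ∧ (G.induce (S : Set V)).Connected}.ncard
      ≤ (Set.range g).ncard := Set.ncard_le_ncard hsub (Set.finite_range g)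
    _ ≤ Fintype.card
        (V × List.Vector Bool (2 * (w - 1)) × List.Vector (Fin D) (w - 1)) := by
        rw [← Set.image_univ]
        refine le_trans (Set.ncard_image_le Set.finite_univ) ?_
        rw [Set.ncard_univ, Nat.card_eq_fintype_card]
    _ = n * (2 ^ (2 * (w - 1)) * D ^ (w - 1)) := hcardA
    _ ≤ n * (4 * D) ^ w := by
        have h1 : 2 ^ (2 * (w - 1)) = 4 ^ (w - 1) := by
          rw [pow_mul]; norm_num
        have h2 : 4 ^ (w - 1) * D ^ (w - 1) = (4 * D) ^ (w - 1) := (mul_pow 4 D (w - 1)).symm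
        have h3 : (4 * D) ^ (w - 1) ≤ (4 * D) ^ w :=
          Nat.pow_le_pow_right (by omega) (by omega)
        rw [h1, h2]
        exact Nat.mul_le_mul_left n h3
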